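/- arXiv:1404.5100 — 3 statements merged into one kernel-verified Lean document; each statement's English description precedes it below -/
import Mathlib

section
/- The differences between successive CCM iterates for f₁ are square-summable: Σ_{r=0}^∞ ‖x^r − x^{r+1}‖² < ∞, where ‖·‖ is the Euclidean norm on ℝ^n. -/
open Filter Topology Matrix

/-- Euclidean norm of a vector in `ℝ^k`. -/
noncomputable def eucNorm {k : ℕ} (v : Fin k → ℝ) : ℝ := Real.sqrt (∑ i, v i ^ 2)

/-- Soft-thresholding operator `S_λ(x) = sign(x) · max(|x| − λ, 0)`. -/
noncomputable def softThresh (lam x : ℝ) : ℝ := Real.sign x * max (|x| - lam) 0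

/-- Gradient of `gr : ℝ^m → ℝ` at `t`. -/
noncomputable def gradv {m : ℕ} (gr : (Fin m → ℝ) → ℝ) (t : Fin m → ℝ) : Fin m → ℝ :=
  fun i => fderiv ℝ gr t (Pi.single i 1)

/-- Hessian quadratic form `vᵀ (∇²gr(t)) v`. -/
noncomputable def hessQF {m : ℕ} (gr : (Fin m → ℝ) → ℝ) (t v : Fin m → ℝ) : ℝ :=
  ∑ i, ∑ j, v i * fderiv ℝ (fun s => gradv gr s j) t (Pi.single i 1) * v j

section AuxLemmas

open Filter Topology Matrix

lemma clm_apply_eq_sum {m : ℕ} (L : (Fin m → ℝ) →L[ℝ] ℝ) (u : Fin m → ℝ) :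
    L u = ∑ j, u j * L (Pi.single j 1) := by
  have h : u = ∑ j, u j • (Pi.single j (1:ℝ) : Fin m → ℝ) := by
    nth_rewrite 1 [pi_eq_sum_univ u]
    congr 1; funext i; congr 1; funext j
    simp [Pi.single_apply, eq_comm]
  conv_lhs => rw [h]
  rw [map_sum]
  simp [smul_eq_mul]

lemma hasDerivAt_line {m : ℕ} (t0 u : Fin m → ℝ) (θ : ℝ) :
    HasDerivAt (fun s : ℝ => t0 + s • u) u θ := by
  simpa using ((hasDerivAt_id θ).smul_const u).const_add t0

section Calc
variable {m : ℕ} {O : Set (Fin m → ℝ)} (hO : IsOpen O)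
  {gr : (Fin m → ℝ) → ℝ} (hg : ContDiffOn ℝ 2 gr O)

include hO hg

lemma gr_diffAt {t : Fin m → ℝ} (ht : t ∈ O) : DifferentiableAt ℝ gr t :=
  (hg.differentiableOn (by norm_num)).differentiableAt (hO.mem_nhds ht)

lemma gradv_contDiffOn (j : Fin m) :
    ContDiffOn ℝ 1 (fun s => gradv gr s j) O := by
  have h1 : ContDiffOn ℝ 1 (fun s => fderiv ℝ gr s) O :=
    hg.fderiv_of_isOpen hO (by norm_num)
  exact h1.clm_apply contDiffOn_const

lemma gj_diffAt (j : Fin m) {t : Fin m → ℝ} (ht : t ∈ O) :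
    DifferentiableAt ℝ (fun s => gradv gr s j) t :=
  ((gradv_contDiffOn hO hg j).differentiableOn (by norm_num)).differentiableAt (hO.mem_nhds ht)

lemma hasDerivAt_G1 (t0 u : Fin m → ℝ) {θ : ℝ} (hθ : t0 + θ • u ∈ O) :
    HasDerivAt (fun s : ℝ => gr (t0 + s • u))
      (∑ j, u j * gradv gr (t0 + θ • u) j) θ := by
  have h := ((gr_diffAt hO hg hθ).hasFDerivAt).comp_hasDerivAt θ (hasDerivAt_line t0 u θ)
  exact h.congr_deriv (by rw [clm_apply_eq_sum]; rfl)

lemma hasDerivAt_G2 (t0 u : Fin m → ℝ) {θ : ℝ} (hθ : t0 + θ • u ∈ O) :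
    HasDerivAt (fun s : ℝ => ∑ j, u j * gradv gr (t0 + s • u) j)
      (hessQF gr (t0 + θ • u) u) θ := by
  have hj : ∀ j : Fin m, HasDerivAt (fun s : ℝ => gradv gr (t0 + s • u) j)
      (∑ i, u i * (fderiv ℝ (fun s => gradv gr s j) (t0 + θ • u)) (Pi.single i 1)) θ := by
    intro j
    have h := ((gj_diffAt hO hg j hθ).hasFDerivAt).comp_hasDerivAt θ (hasDerivAt_line t0 u θ)
    exact h.congr_deriv (by rw [clm_apply_eq_sum])
  have hsum : HasDerivAt (fun s : ℝ => ∑ j, u j * gradv gr (t0 + s • u) j)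
      (∑ j, u j * ∑ i, u i * (fderiv ℝ (fun s => gradv gr s j) (t0 + θ • u)) (Pi.single i 1)) θ :=
    HasDerivAt.fun_sum (fun j _ => (hj j).const_mul (u j))
  convert hsum using 1
  rw [hessQF, Finset.sum_comm]
  congr 1; funext j
  rw [Finset.mul_sum]
  congr 1; funext i
  ring

lemma hess_continuousOn (v : Fin m → ℝ) :
    ContinuousOn (fun t => hessQF gr t v) O := by
  apply continuousOn_finset_sum
  intro i _
  apply continuousOn_finset_sum
  intro j _
  have h1 : ContinuousOn (fun t => fderiv ℝ (fun s => gradv gr s j) t) O :=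
    (gradv_contDiffOn hO hg j).continuousOn_fderiv_of_isOpen hO (by norm_num)
  exact (continuousOn_const.mul (h1.clm_apply continuousOn_const)).mul continuousOn_const

end Calc

lemma hessQF_smul {m : ℕ} (gr : (Fin m → ℝ) → ℝ) (t : Fin m → ℝ) (δ : ℝ) (v : Fin m → ℝ) :
    hessQF gr t (δ • v) = δ ^ 2 * hessQF gr t v := by
  unfold hessQF
  rw [Finset.mul_sum]
  apply Finset.sum_congr rfl; intro i _
  rw [Finset.mul_sum]
  apply Finset.sum_congr rfl; intro j _
  simp only [Pi.smul_apply, smul_eq_mul]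
  ring

lemma pick_theta {a b : ℝ} (h0 : 0 ≤ a) (hab : a < b) :
    ∃ θ : ℝ, 0 ≤ θ ∧ θ < 1 ∧ a < b * θ := by
  have hb : 0 < b := lt_of_le_of_lt h0 hab
  refine ⟨(a + b) / (2 * b), by positivity, ?_, ?_⟩
  · rw [div_lt_one (by positivity)]; linarith
  · rw [show b * ((a + b) / (2 * b)) = (a + b) / 2 by field_simp]
    linarith

lemma key_descent {m : ℕ} {O : Set (Fin m → ℝ)} (hO : IsOpen O)
    {gr : (Fin m → ℝ) → ℝ} (hg : ContDiffOn ℝ 2 gr O)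
    (t0 u : Fin m → ℝ) (hseg : ∀ θ ∈ Set.Icc (0:ℝ) 1, t0 + θ • u ∈ O)
    {M : ℝ} (hM0 : 0 ≤ M)
    (hM : ∀ θ ∈ Set.Icc (0:ℝ) 1, M ≤ hessQF gr (t0 + θ • u) u)
    {P : ℝ → ℝ} (hP : ConvexOn ℝ (Set.Icc (0:ℝ) 1) P)
    (hmin : ∀ θ ∈ Set.Icc (0:ℝ) 1, gr (t0 + u) + P 1 ≤ gr (t0 + θ • u) + P θ) :
    gr (t0 + u) + P 1 ≤ gr t0 + P 0 - M / 2 := by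
  have hQconv : ConvexOn ℝ (Set.Icc (0:ℝ) 1)
      (fun θ : ℝ => gr (t0 + θ • u) - M / 2 * θ ^ 2) := by
    apply convexOn_of_hasDerivWithinAt2_nonneg (convex_Icc 0 1)
      (f' := fun θ => (∑ j, u j * gradv gr (t0 + θ • u) j) - M * θ)
      (f'' := fun θ => hessQF gr (t0 + θ • u) u - M)
    · apply ContinuousOn.sub
      · apply (hg.continuousOn).comp
        · exact (continuous_const.add (continuous_id.smul continuous_const)).continuousOn
        · intro θ hθ; exact hseg θ hθ
      · exact (continuous_const.mul (continuous_pow 2)).continuousOn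
    · intro θ hθ
      rw [interior_Icc] at hθ
      have h1 := hasDerivAt_G1 hO hg t0 u (hseg θ ⟨hθ.1.le, hθ.2.le⟩)
      have h2 : HasDerivAt (fun s : ℝ => M / 2 * s ^ 2) (M * θ) θ := by
        have := (hasDerivAt_pow 2 θ).const_mul (M / 2)
        exact this.congr_deriv (by push_cast; ring)
      exact (h1.sub h2).hasDerivWithinAt
    · intro θ hθ
      rw [interior_Icc] at hθ
      have h2 := hasDerivAt_G2 hO hg t0 u (hseg θ ⟨hθ.1.le, hθ.2.le⟩)
      have h3 : HasDerivAt (fun s : ℝ => M * s) M θ := by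
        simpa using (hasDerivAt_id θ).const_mul M
      exact (h2.sub h3).hasDerivWithinAt
    · intro θ hθ
      rw [interior_Icc] at hθ
      have := hM θ ⟨hθ.1.le, hθ.2.le⟩
      simp only [sub_nonneg]
      exact this
  have hcombo : ∀ θ ∈ Set.Icc (0:ℝ) 1,
      gr (t0 + θ • u) ≤ (1 - θ) * gr t0 + θ * gr (t0 + u) - M / 2 * θ * (1 - θ) := by
    intro θ hθ
    have h := hQconv.2 (Set.left_mem_Icc.2 zero_le_one) (Set.right_mem_Icc.2 zero_le_one)
      (by linarith [hθ.2] : (0:ℝ) ≤ 1 - θ) hθ.1 (by ring)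
    simp only [smul_eq_mul, mul_zero, mul_one, zero_add, zero_smul, add_zero, zero_pow,
      one_pow, one_smul] at h
    nlinarith [h]
  have hP2 : ∀ θ ∈ Set.Icc (0:ℝ) 1, P θ ≤ (1 - θ) * P 0 + θ * P 1 := by
    intro θ hθ
    have h := hP.2 (Set.left_mem_Icc.2 zero_le_one) (Set.right_mem_Icc.2 zero_le_one)
      (by linarith [hθ.2] : (0:ℝ) ≤ 1 - θ) hθ.1 (by ring)
    simpa only [smul_eq_mul, mul_zero, mul_one, zero_add] using h
  have hkey : ∀ θ ∈ Set.Ico (0:ℝ) 1,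
      gr (t0 + u) + P 1 ≤ gr t0 + P 0 - M / 2 * θ := by
    intro θ hθ
    have h1 := hmin θ ⟨hθ.1, hθ.2.le⟩
    have h2 := hcombo θ ⟨hθ.1, hθ.2.le⟩
    have h3 := hP2 θ ⟨hθ.1, hθ.2.le⟩
    have h6 : 0 < 1 - θ := by linarith [hθ.2]
    have h4 : (1 - θ) * ((gr (t0 + u) + P 1) - (gr t0 + P 0) + M / 2 * θ) ≤ 0 := by
      nlinarith
    by_contra hc
    push_neg at hc
    have h7 : 0 < (gr (t0 + u) + P 1) - (gr t0 + P 0) + M / 2 * θ := by linarith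
    nlinarith [mul_pos h6 h7]
  by_contra hcon
  push_neg at hcon
  have h0a : 0 ≤ gr t0 + P 0 - (gr (t0 + u) + P 1) := by
    have := hkey 0 ⟨le_refl 0, one_pos⟩
    simp only [mul_zero] at this
    linarith
  obtain ⟨θ, hθ0, hθ1, hgt⟩ := pick_theta h0a
    (by linarith : gr t0 + P 0 - (gr (t0 + u) + P 1) < M / 2)
  have := hkey θ ⟨hθ0, hθ1⟩
  linarith

lemma pen_combo {n : ℕ} (S : Finset (Fin n)) (a b : Fin n → ℝ) {θ : ℝ}
    (h0 : 0 ≤ θ) (h1 : θ ≤ 1) :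
    ∑ i ∈ S, |((1 - θ) • a + θ • b) i| ≤ (1 - θ) * ∑ i ∈ S, |a i| + θ * ∑ i ∈ S, |b i| := by
  calc ∑ i ∈ S, |((1 - θ) • a + θ • b) i|
      ≤ ∑ i ∈ S, ((1 - θ) * |a i| + θ * |b i|) := by
        apply Finset.sum_le_sum; intro i _
        simp only [Pi.add_apply, Pi.smul_apply, smul_eq_mul]
        calc |(1 - θ) * a i + θ * b i| ≤ |(1 - θ) * a i| + |θ * b i| := abs_add_le _ _
          _ = (1 - θ) * |a i| + θ * |b i| := by
              rw [abs_mul, abs_mul, abs_of_nonneg (by linarith : (0:ℝ) ≤ 1 - θ), abs_of_nonneg h0]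
    _ = _ := by rw [Finset.sum_add_distrib, ← Finset.mul_sum, ← Finset.mul_sum]

end AuxLemmas

section Bounded
variable {m n : ℕ} (E : Matrix (Fin m) (Fin n) ℝ)
    {Dg : Set (Fin m → ℝ)} {gr : (Fin m → ℝ) → ℝ}

lemma bounded_image
    (hDgopen : IsOpen Dg) (hDgconv : Convex ℝ Dg) (hgconv : ConvexOn ℝ Dg gr)
    (hgcont : ContinuousOn gr Dg) (hgs : StrictConvexOn ℝ Dg gr)
    (hfe : ∀ (w : ℕ → Fin m → ℝ) (v : Fin m → ℝ) (B : ℝ),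
      (∀ᶠ k in atTop, w k ∈ Dg ∧ gr (w k) ≤ B) → Tendsto w atTop (𝓝 v) → v ∈ Dg)
    (S : Finset (Fin n)) {lam : ℝ} (hlam : 0 < lam)
    {X : Set (Fin n → ℝ)} (hX : X = {x | ∀ i ∉ S, 0 ≤ x i})
    {F : (Fin n → ℝ) → ℝ} (hF : ∀ x, F x = gr (E.mulVec x) + lam * ∑ i ∈ S, |x i|)
    {xs : Fin n → ℝ} (hxsX : xs ∈ X) (hxsD : E.mulVec xs ∈ Dg)
    (hxsmin : ∀ y ∈ X, E.mulVec y ∈ Dg → F xs ≤ F y)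
    (c : ℝ) :
    ∃ R : ℝ, ∀ z ∈ X, E.mulVec z ∈ Dg → F z ≤ c → ‖E.mulVec z‖ ≤ R := by
  by_contra hcon
  push_neg at hcon
  set ts : Fin m → ℝ := E.mulVec xs with hts
  set ps : ℝ := ∑ i ∈ S, |xs i| with hps
  -- choose a sequence
  have hz : ∀ k : ℕ, ∃ z, z ∈ X ∧ E.mulVec z ∈ Dg ∧ F z ≤ c ∧ (k : ℝ) + ‖ts‖ + 1 < ‖E.mulVec z‖ := by
    intro k
    obtain ⟨z, hz1, hz2, hz3, hz4⟩ := hcon ((k : ℝ) + ‖ts‖ + 1)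
    exact ⟨z, hz1, hz2, hz3, hz4⟩
  choose z hzX hzD hzF hznorm using hz
  set t : ℕ → Fin m → ℝ := fun k => E.mulVec (z k) with htdef
  set p : ℕ → ℝ := fun k => ∑ i ∈ S, |z k i| with hpdef
  have hp0 : ∀ k, 0 ≤ p k := fun k => Finset.sum_nonneg fun i _ => abs_nonneg _
  have hps0 : 0 ≤ ps := Finset.sum_nonneg fun i _ => abs_nonneg _
  have hgtk : ∀ k, gr (t k) ≤ c - lam * p k := by
    intro k
    have := hzF k
    rw [hF] at this
    linarith [mul_nonneg hlam.le (hp0 k)]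
  have hgtk' : ∀ k, gr (t k) ≤ c := fun k =>
    le_trans (hgtk k) (by linarith [mul_nonneg hlam.le (hp0 k)])
  set R : ℕ → ℝ := fun k => ‖t k - ts‖ + |p k - ps| with hRdef
  have hR1 : ∀ k, 1 ≤ R k := by
    intro k
    have h1 : (k : ℝ) + ‖ts‖ + 1 < ‖t k‖ := hznorm k
    have h2 : ‖t k‖ - ‖ts‖ ≤ ‖t k - ts‖ := norm_sub_norm_le _ _
    have : (0:ℝ) ≤ (k:ℝ) := Nat.cast_nonneg k
    have habs : (0:ℝ) ≤ |p k - ps| := abs_nonneg _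
    simp only [hRdef]
    linarith
  have hR0 : ∀ k, 0 < R k := fun k => lt_of_lt_of_le one_pos (hR1 k)
  have hRtop : Tendsto R atTop atTop := by
    apply tendsto_atTop_mono ?_ tendsto_natCast_atTop_atTop
    intro k
    have h1 : (k : ℝ) + ‖ts‖ + 1 < ‖t k‖ := hznorm k
    have h2 : ‖t k‖ - ‖ts‖ ≤ ‖t k - ts‖ := norm_sub_norm_le _ _
    have habs : (0:ℝ) ≤ |p k - ps| := abs_nonneg _
    have h0 : (0:ℝ) ≤ ‖ts‖ := norm_nonneg _
    simp only [hRdef]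
    linarith
  set a : ℕ → Fin m → ℝ := fun k => (R k)⁻¹ • (t k - ts) with hadef
  set b : ℕ → ℝ := fun k => (p k - ps) / R k with hbdef
  have hab1 : ∀ k, ‖a k‖ + |b k| = 1 := by
    intro k
    have : ‖a k‖ = ‖t k - ts‖ / R k := by
      show ‖(R k)⁻¹ • (t k - ts)‖ = _
      rw [norm_smul, Real.norm_eq_abs, abs_inv, abs_of_pos (hR0 k), inv_mul_eq_div]
    rw [this, hbdef]
    simp only [abs_div, abs_of_pos (hR0 k)]
    rw [← add_div, div_eq_one_iff_eq (ne_of_gt (hR0 k))]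
  -- extract convergent subsequences
  have haball : ∀ k, a k ∈ Metric.closedBall (0 : Fin m → ℝ) 1 := by
    intro k
    rw [Metric.mem_closedBall, dist_zero_right]
    have := hab1 k
    have := abs_nonneg (b k)
    linarith
  obtain ⟨d, hdball, φ, hφmono, hφtend⟩ :=
    tendsto_subseq_of_bounded (Metric.isBounded_closedBall (x := (0 : Fin m → ℝ)) (r := 1)) haball
  have hbball : ∀ k, b (φ k) ∈ Metric.closedBall (0 : ℝ) 1 := by
    intro k
    rw [Metric.mem_closedBall, dist_zero_right]
    have := hab1 (φ k)
    have := norm_nonneg (a (φ k))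
    rw [Real.norm_eq_abs]
    linarith
  obtain ⟨π, hπball, ψ, hψmono, hψtend⟩ :=
    tendsto_subseq_of_bounded (Metric.isBounded_closedBall (x := (0 : ℝ)) (r := 1)) hbball
  set idx : ℕ → ℕ := fun k => φ (ψ k) with hidx
  have hidxmono : StrictMono idx := hφmono.comp hψmono
  have had : Tendsto (fun k => a (idx k)) atTop (𝓝 d) := hφtend.comp hψmono.tendsto_atTop
  have hbd : Tendsto (fun k => b (idx k)) atTop (𝓝 π) := hψtend
  have hRidx : Tendsto (fun k => R (idx k)) atTop atTop :=
    hRtop.comp hidxmono.tendsto_atTop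
  have habsum : ‖d‖ + |π| = 1 := by
    have h1 : Tendsto (fun k => ‖a (idx k)‖ + |b (idx k)|) atTop (𝓝 (‖d‖ + |π|)) :=
      (had.norm.add hbd.abs)
    have h2 : Tendsto (fun k => ‖a (idx k)‖ + |b (idx k)|) atTop (𝓝 1) := by
      simp only [hab1]
      exact tendsto_const_nhds
    exact tendsto_nhds_unique h1 h2
  -- convexity of mulVec combos
  have hmv : ∀ (θ : ℝ) (u v : Fin n → ℝ),
      E.mulVec ((1 - θ) • u + θ • v) = (1 - θ) • E.mulVec u + θ • E.mulVec v := by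
    intro θ u v
    simp only [← Matrix.mulVecLin_apply, map_add, _root_.map_smul]
  have hFs : F xs = gr ts + lam * ps := hF xs
  -- the main claim
  have hclaim : ∀ s : ℝ, 0 ≤ s →
      (ts + s • d ∈ Dg ∧ gr (ts + s • d) + lam * (ps + s * π) = gr ts + lam * ps) := by
    intro s hs
    set θ : ℕ → ℝ := fun k => s / R (idx k) with hθdef
    have hθ0 : ∀ k, 0 ≤ θ k := fun k => div_nonneg hs (hR0 _).le
    have hθten : Tendsto θ atTop (𝓝 0) := tendsto_const_nhds.div_atTop hRidx
    have hθev : ∀ᶠ k in atTop, θ k ≤ 1 := by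
      filter_upwards [hθten.eventually_lt_const one_pos] with k hk using hk.le
    set w : ℕ → Fin m → ℝ := fun k => ts + s • a (idx k) with hwdef
    set y : ℕ → Fin n → ℝ := fun k => (1 - θ k) • xs + θ k • z (idx k) with hydef
    have hwy : ∀ k, E.mulVec (y k) = w k := by
      intro k
      show E.mulVec ((1 - θ k) • xs + θ k • z (idx k)) = ts + s • a (idx k)
      rw [hmv]
      have h1 : s • a (idx k) = θ k • (t (idx k) - ts) := by
        show s • ((R (idx k))⁻¹ • (t (idx k) - ts)) = (s / R (idx k)) • (t (idx k) - ts)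
        rw [smul_smul, div_eq_mul_inv]
      rw [h1]
      module
    have hwcomb : ∀ k, w k = (1 - θ k) • ts + θ k • t (idx k) := by
      intro k
      rw [← hwy k]
      show E.mulVec ((1 - θ k) • xs + θ k • z (idx k)) = _
      rw [hmv]
    have hyX : ∀ k, θ k ≤ 1 → y k ∈ X := by
      intro k hk1
      rw [hX]
      intro i hi
      have h1 : 0 ≤ xs i := by rw [hX] at hxsX; exact hxsX i hi
      have h2 : 0 ≤ z (idx k) i := by
        have := hzX (idx k); rw [hX] at this; exact this i hi
      show 0 ≤ (1 - θ k) * xs i + θ k * z (idx k) i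
      have h3 : 0 ≤ 1 - θ k := by linarith
      have h4 := mul_nonneg h3 h1
      have h5 := mul_nonneg (hθ0 k) h2
      linarith
    have hyDg : ∀ k, θ k ≤ 1 → E.mulVec (y k) ∈ Dg := by
      intro k hk1
      rw [hwy k, hwcomb k]
      exact hDgconv hxsD (hzD (idx k)) (by linarith) (hθ0 k) (by ring)
    have hbeq : ∀ k, θ k * (p (idx k) - ps) = s * b (idx k) := by
      intro k
      show s / R (idx k) * (p (idx k) - ps) = s * ((p (idx k) - ps) / R (idx k))
      ring
    have hpen : ∀ k, θ k ≤ 1 → ∑ i ∈ S, |y k i| ≤ ps + s * b (idx k) := by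
      intro k hk1
      have h1 := pen_combo S xs (z (idx k)) (hθ0 k) hk1
      have h2 : (1 - θ k) * ps + θ k * p (idx k) = ps + s * b (idx k) := by
        rw [← hbeq k]; ring
      calc ∑ i ∈ S, |y k i| ≤ (1 - θ k) * ps + θ k * p (idx k) := h1
        _ = _ := h2
    set U : ℕ → ℝ := fun k => gr (w k) + lam * (ps + s * b (idx k)) with hUdef
    have hFsU : ∀ᶠ k in atTop, gr ts + lam * ps ≤ U k := by
      filter_upwards [hθev] with k hk1
      have h1 := hxsmin (y k) (hyX k hk1) (hyDg k hk1)
      rw [hF (y k), hwy k] at h1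
      have h2 : lam * ∑ i ∈ S, |y k i| ≤ lam * (ps + s * b (idx k)) :=
        mul_le_mul_of_nonneg_left (hpen k hk1) hlam.le
      rw [hFs] at h1
      simp only [hUdef]
      linarith
    have hgw_bound : ∀ᶠ k in atTop, gr (w k) ≤ max (gr ts) c ∧ w k ∈ Dg := by
      filter_upwards [hθev] with k hk1
      have hmem : w k ∈ Dg := by rw [← hwy k]; exact hyDg k hk1
      have hcvx := hgconv.2 hxsD (hzD (idx k)) (by linarith : (0:ℝ) ≤ 1 - θ k) (hθ0 k) (by ring)
      rw [← hwcomb k] at hcvx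
      have : gr (w k) ≤ (1 - θ k) * gr ts + θ k * gr (t (idx k)) := by
        simpa [smul_eq_mul] using hcvx
      have h3 : gr (t (idx k)) ≤ c := hgtk' (idx k)
      have h4 : gr ts ≤ max (gr ts) c := le_max_left _ _
      have h5 : c ≤ max (gr ts) c := le_max_right _ _
      constructor
      · nlinarith [hθ0 k]
      · exact hmem
    have hwten : Tendsto w atTop (𝓝 (ts + s • d)) := by
      apply Tendsto.const_add
      exact had.const_smul s
    have hvDg : ts + s • d ∈ Dg :=
      hfe w (ts + s • d) (max (gr ts) c)
        (by filter_upwards [hgw_bound] with k hk using ⟨hk.2, hk.1⟩) hwten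
    have hgrw : Tendsto (fun k => gr (w k)) atTop (𝓝 (gr (ts + s • d))) :=
      ((hgcont.continuousAt (hDgopen.mem_nhds hvDg)).tendsto).comp hwten
    have hUten : Tendsto U atTop (𝓝 (gr (ts + s • d) + lam * (ps + s * π))) := by
      apply hgrw.add
      exact (tendsto_const_nhds.add (hbd.const_mul s)).const_mul lam
    have hle1 : gr ts + lam * ps ≤ gr (ts + s • d) + lam * (ps + s * π) :=
      ge_of_tendsto hUten hFsU
    have hle2 : gr (ts + s • d) + lam * (ps + s * π) ≤ gr ts + lam * ps := by
      have hWten : Tendsto (fun k => (1 - θ k) * (gr ts + lam * ps) + θ k * c)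
          atTop (𝓝 (gr ts + lam * ps)) := by
        have h1 := (((tendsto_const_nhds (x := (1:ℝ))).sub hθten).mul_const
          (gr ts + lam * ps)).add (hθten.mul_const c)
        norm_num at h1
        exact h1
      apply le_of_tendsto_of_tendsto hUten hWten
      filter_upwards [hθev] with k hk1
      have hcvx := hgconv.2 hxsD (hzD (idx k)) (by linarith : (0:ℝ) ≤ 1 - θ k) (hθ0 k) (by ring)
      rw [← hwcomb k] at hcvx
      have h1 : gr (w k) ≤ (1 - θ k) * gr ts + θ k * gr (t (idx k)) := by
        simpa [smul_eq_mul] using hcvx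
      have h2 : gr (t (idx k)) ≤ c - lam * p (idx k) := hgtk (idx k)
      show U k ≤ _
      simp only [hUdef]
      have h3 : lam * (ps + s * b (idx k)) = lam * ((1 - θ k) * ps + θ k * p (idx k)) := by
        rw [← hbeq k]; ring_nf
      rw [h3]
      have := hθ0 k
      nlinarith
    exact ⟨hvDg, le_antisymm hle2 hle1⟩
  -- derive the contradiction
  by_cases hd : d = 0
  · have h1 := (hclaim 1 zero_le_one).2
    rw [hd] at h1
    simp only [smul_zero, add_zero, one_mul] at h1
    have hπ : π = 0 := by
      have : lam * π = 0 := by linarith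
      rcases mul_eq_zero.mp this with h | h
      · exact absurd h (ne_of_gt hlam)
      · exact h
    rw [hd, hπ] at habsum
    norm_num at habsum
  · have h1 := (hclaim 1 zero_le_one).2
    have h2 := (hclaim 2 (by norm_num)).2
    have hts0 : ts ∈ Dg := hxsD
    have hts2 : ts + (2:ℝ) • d ∈ Dg := (hclaim 2 (by norm_num)).1
    have hne : ts ≠ ts + (2:ℝ) • d := by
      intro h
      apply hd
      have h0 : ts + (0 : Fin m → ℝ) = ts + (2:ℝ) • d := by rw [add_zero]; exact h
      have := add_left_cancel h0
      have h2d : (2:ℝ) • d = 0 := this.symm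
      simpa using smul_eq_zero.mp h2d
    have hmid := hgs.2 hts0 hts2 hne (by norm_num : (0:ℝ) < 1/2) (by norm_num : (0:ℝ) < 1/2)
      (by norm_num)
    have hpt : (1/2 : ℝ) • ts + (1/2 : ℝ) • (ts + (2:ℝ) • d) = ts + (1:ℝ) • d := by module
    rw [hpt] at hmid
    simp only [smul_eq_mul] at hmid
    linarith

end Bounded

section Branch
variable {m : ℕ} {Dg : Set (Fin m → ℝ)} {gr : (Fin m → ℝ) → ℝ}

lemma seq_combo_tendsto (u t : Fin m → ℝ) :
    Tendsto (fun j : ℕ => ((j:ℝ)+2)⁻¹ • u + (1 - ((j:ℝ)+2)⁻¹) • t) atTop (𝓝 t) := by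
  have h1 : Tendsto (fun j : ℕ => ((j:ℝ)+2)⁻¹) atTop (𝓝 0) := by
    apply Tendsto.inv_tendsto_atTop
    exact tendsto_atTop_add_const_right _ 2 tendsto_natCast_atTop_atTop
  have h2 := ((h1.smul_const u).add (((tendsto_const_nhds (x := (1:ℝ))).sub h1).smul_const t))
  norm_num at h2
  exact h2

lemma blowup_open (hDg : Convex ℝ Dg) (hgconv : ConvexOn ℝ Dg gr)
    (hCg : (interior Dg).Nonempty)
    (hbl : ∀ t₀ ∈ frontier (interior Dg),
      Tendsto gr (nhdsWithin t₀ (interior Dg)) atTop) :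
    Dg = interior Dg := by
  refine Set.Subset.antisymm ?_ interior_subset
  intro t ht
  by_contra htint
  obtain ⟨u, hu⟩ := hCg
  set v : ℕ → Fin m → ℝ := fun j => ((j:ℝ)+2)⁻¹ • u + (1 - ((j:ℝ)+2)⁻¹) • t with hv
  have hθj : ∀ j : ℕ, 0 < ((j:ℝ)+2)⁻¹ ∧ ((j:ℝ)+2)⁻¹ ≤ 1 := by
    intro j
    constructor
    · positivity
    · rw [inv_le_one_iff₀]; right; push_cast; linarith [Nat.cast_nonneg (α := ℝ) j]
  have hvint : ∀ j, v j ∈ interior Dg := by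
    intro j
    exact hDg.combo_interior_closure_mem_interior hu (subset_closure ht)
      (hθj j).1 (by linarith [(hθj j).1.le, (hθj j).2]) (by ring)
  have hvten : Tendsto v atTop (𝓝 t) := seq_combo_tendsto u t
  have htfr : t ∈ frontier (interior Dg) := by
    constructor
    · exact mem_closure_of_tendsto hvten (Eventually.of_forall hvint)
    · rwa [interior_interior]
  have hbl' := hbl t htfr
  have hten : Tendsto v atTop (nhdsWithin t (interior Dg)) := by
    rw [tendsto_nhdsWithin_iff]
    exact ⟨hvten, Eventually.of_forall hvint⟩
  have hcomp := hbl'.comp hten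
  have hbound : ∀ j, gr (v j) ≤ max (gr u) (gr t) := by
    intro j
    have h := hgconv.2 (interior_subset hu) ht (hθj j).1.le
      (by linarith [(hθj j).1.le, (hθj j).2]) (by ring : ((j:ℝ)+2)⁻¹ + (1 - ((j:ℝ)+2)⁻¹) = 1)
    have h2 : gr (v j) ≤ ((j:ℝ)+2)⁻¹ * gr u + (1 - ((j:ℝ)+2)⁻¹) * gr t := by
      simpa [smul_eq_mul] using h
    have hθ := hθj j
    nlinarith [le_max_left (gr u) (gr t), le_max_right (gr u) (gr t)]
  obtain ⟨j, hj⟩ := (hcomp.eventually_gt_atTop (max (gr u) (gr t))).exists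
  exact absurd (hbound j) (not_le.mpr hj)

lemma blowup_fe (hDgopen : Dg = interior Dg)
    (hbl : ∀ t₀ ∈ frontier (interior Dg),
      Tendsto gr (nhdsWithin t₀ (interior Dg)) atTop) :
    ∀ (w : ℕ → Fin m → ℝ) (v : Fin m → ℝ) (B : ℝ),
      (∀ᶠ k in atTop, w k ∈ Dg ∧ gr (w k) ≤ B) → Tendsto w atTop (𝓝 v) → v ∈ Dg := by
  intro w v B hev hten
  rw [hDgopen]
  by_contra hvint
  have hvcl : v ∈ closure (interior Dg) := by
    apply mem_closure_of_tendsto hten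
    filter_upwards [hev] with k hk
    rw [← hDgopen]; exact hk.1
  have hvfr : v ∈ frontier (interior Dg) := ⟨hvcl, by rwa [interior_interior]⟩
  have hbl' := hbl v hvfr
  have hten' : Tendsto w atTop (nhdsWithin v (interior Dg)) := by
    rw [tendsto_nhdsWithin_iff]
    refine ⟨hten, ?_⟩
    filter_upwards [hev] with k hk
    rw [← hDgopen]; exact hk.1
  have hcomp := hbl'.comp hten'
  obtain ⟨k, hk1, hk2⟩ := ((hcomp.eventually_gt_atTop B).and hev).exists
  exact absurd hk2.2 (not_le.mpr hk1)

/-- compact convex hull of a bounded sublevel subset stays in an open convex domain -/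
lemma compact_hull (hDgopen : Dg = interior Dg) (hDg : Convex ℝ Dg)
    (hgconv : ConvexOn ℝ Dg gr)
    (hfe : ∀ (w : ℕ → Fin m → ℝ) (v : Fin m → ℝ) (B : ℝ),
      (∀ᶠ k in atTop, w k ∈ Dg ∧ gr (w k) ≤ B) → Tendsto w atTop (𝓝 v) → v ∈ Dg)
    (T : Set (Fin m → ℝ)) (c R : ℝ) (hTsub : T ⊆ {t ∈ Dg | gr t ≤ c})
    (hTR : ∀ t ∈ T, ‖t‖ ≤ R) :
    ∃ K : Set (Fin m → ℝ), IsCompact K ∧ Convex ℝ K ∧ K ⊆ Dg ∧ T ⊆ K := by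
  refine ⟨closure (convexHull ℝ T), ?_, (convex_convexHull ℝ T).closure, ?_, ?_⟩
  · apply IsCompact.of_isClosed_subset (isCompact_closedBall (0 : Fin m → ℝ) R)
      isClosed_closure
    have h1 : convexHull ℝ T ⊆ Metric.closedBall 0 R := by
      apply convexHull_min ?_ (convex_closedBall _ _)
      intro t ht
      rw [Metric.mem_closedBall, dist_zero_right]
      exact hTR t ht
    calc closure (convexHull ℝ T) ⊆ closure (Metric.closedBall 0 R) := closure_mono h1
      _ = Metric.closedBall 0 R := IsClosed.closure_eq Metric.isClosed_closedBall
  · intro v hv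
    have hL : convexHull ℝ T ⊆ {t ∈ Dg | gr t ≤ c} :=
      convexHull_min hTsub (hgconv.convex_le c)
    obtain ⟨w, hw, hwten⟩ := mem_closure_iff_seq_limit.mp hv
    exact hfe w v c (Eventually.of_forall fun k => ⟨(hL (hw k)).1, (hL (hw k)).2⟩) hwten
  · exact (subset_convexHull ℝ T).trans subset_closure

end Branch

/-- The successive differences of the CCM iterates for `f₁` are square-summable. -/
theorem ccm_f1_square_summable
(m n : ℕ) (hm : 0 < m) (hn : 0 < n)
    (S : Finset (Fin n)) (lam : ℝ) (hlam : 0 < lam)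
    (E : Matrix (Fin m) (Fin n) ℝ) (hE : ∀ j, ∃ i, E i j ≠ 0)
    (Dg : Set (Fin m → ℝ)) (gr : (Fin m → ℝ) → ℝ)
    (hDg : Convex ℝ Dg) (hgconv : ConvexOn ℝ Dg gr)
    (hCg : (interior Dg).Nonempty)
    (hgs : StrictConvexOn ℝ (interior Dg) gr)
    (hgC2 : ContDiffOn ℝ 2 gr (interior Dg))
    (hhess : ∀ t ∈ interior Dg, ∀ v : Fin m → ℝ, v ≠ 0 → 0 < hessQF gr t v)
    (hA3 : (∀ t₀ ∈ frontier (interior Dg),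
              Filter.Tendsto gr (nhdsWithin t₀ (interior Dg)) Filter.atTop)
           ∨ (S = Finset.univ ∧ (∀ t, 0 ≤ gr t) ∧ Dg = Set.univ))
    (X : Set (Fin n → ℝ)) (hX : X = {x | ∀ i ∉ S, 0 ≤ x i})
    (F : (Fin n → ℝ) → ℝ)
    (hF : ∀ x, F x = gr (E.mulVec x) + lam * ∑ i ∈ S, |x i|)
    (XStar : Set (Fin n → ℝ))
    (hXStar : XStar = {x | x ∈ X ∧ E.mulVec x ∈ Dg ∧
                ∀ y ∈ X, E.mulVec y ∈ Dg → F x ≤ F y})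
    (hXStarNe : XStar.Nonempty)
(x : ℕ → Fin n → ℝ) (xi : ℕ → ℕ → Fin n → ℝ)
    (hx0 : x 0 ∈ X) (hx0fin : E.mulVec (x 0) ∈ Dg)
    (hxi0 : ∀ r, xi r 0 = x r)
    (hstep : ∀ r, ∀ i : Fin n,
        xi r ((i : ℕ) + 1) ∈ X ∧ E.mulVec (xi r ((i : ℕ) + 1)) ∈ Dg ∧
        (∀ j, j ≠ i → xi r ((i : ℕ) + 1) j = xi r (i : ℕ) j) ∧
        (∀ y ∈ X, (∀ j, j ≠ i → y j = xi r (i : ℕ) j) →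
            E.mulVec y ∈ Dg → F (xi r ((i : ℕ) + 1)) ≤ F y))
    (hxsucc : ∀ r, x (r + 1) = xi r n) :
    Summable (fun r => eucNorm (x r - x (r + 1)) ^ 2) := by
  classical
  obtain ⟨xs, hxs⟩ := hXStarNe
  rw [hXStar] at hxs
  obtain ⟨hxsX, hxsD, hxsmin⟩ := hxs
  -- Branch facts : Dg is open, and limits of Dg-points with bounded gr-values stay in Dg
  have hDgeq : Dg = interior Dg := by
    rcases hA3 with h | ⟨_, _, h⟩
    · exact blowup_open hDg hgconv hCg h
    · rw [h, interior_univ]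
  have hfe : ∀ (w : ℕ → Fin m → ℝ) (v : Fin m → ℝ) (B : ℝ),
      (∀ᶠ k in Filter.atTop, w k ∈ Dg ∧ gr (w k) ≤ B) →
      Filter.Tendsto w Filter.atTop (nhds v) → v ∈ Dg := by
    rcases hA3 with h | ⟨_, _, h⟩
    · exact blowup_fe hDgeq h
    · intro w v B _ _; rw [h]; trivial
  have hDgopen : IsOpen Dg := by rw [hDgeq]; exact isOpen_interior
  rw [← hDgeq] at hgs hgC2 hhess
  have hgcont : ContinuousOn gr Dg := hgC2.continuousOn
  set c : ℝ := F (x 0) with hc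
  -- iterate feasibility
  have hsub : ∀ r, (x r ∈ X ∧ E.mulVec (x r) ∈ Dg) →
      ∀ k, k ≤ n → xi r k ∈ X ∧ E.mulVec (xi r k) ∈ Dg := by
    intro r hr k
    induction k with
    | zero => intro _; rw [hxi0]; exact hr
    | succ k _ =>
      intro hk
      have hkn : k < n := hk
      exact ⟨(hstep r ⟨k, hkn⟩).1, (hstep r ⟨k, hkn⟩).2.1⟩
  have hxmem : ∀ r, x r ∈ X ∧ E.mulVec (x r) ∈ Dg := by
    intro r
    induction r with
    | zero => exact ⟨hx0, hx0fin⟩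
    | succ r ih =>
      rw [hxsucc r]
      exact hsub r ih n le_rfl
  have hdec : ∀ r k, k < n → F (xi r (k + 1)) ≤ F (xi r k) := by
    intro r k hk
    have hmem := hsub r (hxmem r) k hk.le
    exact (hstep r ⟨k, hk⟩).2.2.2 (xi r k) hmem.1 (fun j _ => rfl) hmem.2
  have hchain : ∀ r k, k ≤ n → F (xi r k) ≤ F (x r) := by
    intro r k
    induction k with
    | zero => intro _; rw [hxi0]
    | succ k ih =>
      intro hk
      have hkn : k < n := hk
      exact le_trans (hdec r k hkn) (ih hkn.le)
  have hxdec : ∀ r, F (x (r + 1)) ≤ F (x r) := by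
    intro r
    rw [hxsucc r]
    exact hchain r n le_rfl
  have hFx0 : ∀ r, F (x r) ≤ c := by
    intro r
    induction r with
    | zero => exact le_rfl
    | succ r ih => exact le_trans (hxdec r) ih
  have hFall : ∀ r k, k ≤ n → F (xi r k) ≤ c :=
    fun r k hk => le_trans (hchain r k hk) (hFx0 r)
  have hFstar : ∀ z ∈ X, E.mulVec z ∈ Dg → F xs ≤ F z := hxsmin
  -- bounded images
  obtain ⟨R, hR⟩ := bounded_image E hDgopen hDg hgconv hgcont hgs hfe S hlam hX hF
    hxsX hxsD hxsmin c
  -- penalty nonneg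
  have hpen0 : ∀ z : Fin n → ℝ, 0 ≤ ∑ i ∈ S, |z i| :=
    fun z => Finset.sum_nonneg fun i _ => abs_nonneg _
  have hgrle : ∀ z : Fin n → ℝ, F z ≤ c → gr (E.mulVec z) ≤ c := by
    intro z hz
    rw [hF z] at hz
    nlinarith [hpen0 z, mul_nonneg hlam.le (hpen0 z)]
  -- the compact convex set K
  set T : Set (Fin m → ℝ) := {t | ∃ r k, k ≤ n ∧ t = E.mulVec (xi r k)} with hT
  have hTmem : ∀ r k, k ≤ n → E.mulVec (xi r k) ∈ T := fun r k hk => ⟨r, k, hk, rfl⟩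
  have hTsub : T ⊆ {t ∈ Dg | gr t ≤ c} := by
    rintro t ⟨r, k, hk, rfl⟩
    exact ⟨(hsub r (hxmem r) k hk).2, hgrle _ (hFall r k hk)⟩
  have hTR : ∀ t ∈ T, ‖t‖ ≤ R := by
    rintro t ⟨r, k, hk, rfl⟩
    have hmem := hsub r (hxmem r) k hk
    exact hR _ hmem.1 hmem.2 (hFall r k hk)
  obtain ⟨K, hKcomp, hKconv, hKDg, hTK⟩ :=
    compact_hull hDgeq hDg hgconv hfe T c R hTsub hTR
  have hKne : K.Nonempty := ⟨E.mulVec (xi 0 0), hTK (hTmem 0 0 (Nat.zero_le _))⟩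
  -- the strong convexity constant
  have hcolne : ∀ j : Fin n, (fun i0 => E i0 j) ≠ 0 := by
    intro j h
    obtain ⟨i0, hi0⟩ := hE j
    exact hi0 (congrFun h i0)
  have hσj : ∀ j : Fin n, ∃ σj : ℝ, 0 < σj ∧
      ∀ t ∈ K, σj ≤ hessQF gr t (fun i0 => E i0 j) := by
    intro j
    obtain ⟨t0, ht0, hmin⟩ := hKcomp.exists_isMinOn hKne
      ((hess_continuousOn hDgopen hgC2 (fun i0 => E i0 j)).mono hKDg)
    exact ⟨hessQF gr t0 (fun i0 => E i0 j), hhess t0 (hKDg ht0) _ (hcolne j),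
      fun t ht => hmin ht⟩
  choose σf hσpos hσlb using hσj
  have hne : Nonempty (Fin n) := ⟨⟨0, hn⟩⟩
  set σ : ℝ := Finset.univ.inf' Finset.univ_nonempty σf with hσdef
  have hσ0 : 0 < σ := by
    rw [hσdef, Finset.lt_inf'_iff]
    exact fun j _ => hσpos j
  have hσle : ∀ j : Fin n, σ ≤ σf j :=
    fun j => Finset.inf'_le _ (Finset.mem_univ j)
  -- the per-step descent estimate
  have hstepdec : ∀ r : ℕ, ∀ i : Fin n,
      F (xi r ((i:ℕ) + 1)) + σ * (xi r ((i:ℕ)+1) i - xi r (i:ℕ) i) ^ 2 / 2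
        ≤ F (xi r (i:ℕ)) := by
    intro r i
    set p : Fin n → ℝ := xi r (i:ℕ) with hp
    set q : Fin n → ℝ := xi r ((i:ℕ) + 1) with hq
    have hpmem := hsub r (hxmem r) (i:ℕ) i.isLt.le
    have hqmem := hsub r (hxmem r) ((i:ℕ)+1) i.isLt
    set δ : ℝ := q i - p i with hδ
    have hqp : q - p = Pi.single i δ := by
      funext j
      by_cases hj : j = i
      · subst hj; simp [hδ]
      · rw [Pi.sub_apply, Pi.single_eq_of_ne hj, sub_eq_zero]
        exact (hstep r i).2.2.1 j hj
    set t0 : Fin m → ℝ := E.mulVec p with ht0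
    set u : Fin m → ℝ := E.mulVec q - E.mulVec p with hu
    have huδ : u = δ • (fun i0 => E i0 i) := by
      have hms : E.mulVec q - E.mulVec p = E.mulVec (q - p) := by
        simp only [← Matrix.mulVecLin_apply, map_sub]
      rw [hu, hms, hqp]
      funext i0
      simp [Matrix.mulVec_single, mul_comm]
    have hmvline : ∀ θ : ℝ, E.mulVec ((1 - θ) • p + θ • q) = t0 + θ • u := by
      intro θ
      simp only [← Matrix.mulVecLin_apply, map_add, _root_.map_smul]
      simp only [Matrix.mulVecLin_apply, ht0, hu]
      module
    have hsegK : ∀ θ ∈ Set.Icc (0:ℝ) 1, t0 + θ • u ∈ K := by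
      intro θ hθ
      rw [← hmvline θ]
      have hcomb : E.mulVec ((1 - θ) • p + θ • q)
          = (1 - θ) • E.mulVec p + θ • E.mulVec q := by
        simp only [← Matrix.mulVecLin_apply, map_add, _root_.map_smul]
      rw [hcomb]
      exact hKconv (hTK (hTmem r (i:ℕ) i.isLt.le)) (hTK (hTmem r ((i:ℕ)+1) i.isLt))
        (by linarith [hθ.2] : (0:ℝ) ≤ 1 - θ) hθ.1 (by ring)
    have hseg : ∀ θ ∈ Set.Icc (0:ℝ) 1, t0 + θ • u ∈ Dg :=
      fun θ hθ => hKDg (hsegK θ hθ)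
    have hM : ∀ θ ∈ Set.Icc (0:ℝ) 1, σ * δ ^ 2 ≤ hessQF gr (t0 + θ • u) u := by
      intro θ hθ
      have hpt := hsegK θ hθ
      set w : Fin m → ℝ := t0 + θ • u with hw
      rw [show hessQF gr w u = δ ^ 2 * hessQF gr w (fun i0 => E i0 i) by
        rw [huδ, hessQF_smul]]
      have h1 := hσlb i w hpt
      have h2 := hσle i
      nlinarith [sq_nonneg δ]
    set P : ℝ → ℝ := fun θ => lam * ∑ i' ∈ S, |((1 - θ) • p + θ • q) i'| with hP
    have hPconv : ConvexOn ℝ (Set.Icc (0:ℝ) 1) P := by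
      refine ⟨convex_Icc _ _, ?_⟩
      intro θ1 h1 θ2 h2 a b ha hb hab
      have hpt : (1 - (a*θ1+b*θ2)) • p + (a*θ1+b*θ2) • q
          = a • ((1 - θ1) • p + θ1 • q) + b • ((1 - θ2) • p + θ2 • q) := by
        have h1 : a • ((1 - θ1) • p + θ1 • q) + b • ((1 - θ2) • p + θ2 • q)
            = ((a + b) - (a*θ1+b*θ2)) • p + (a*θ1+b*θ2) • q := by module
        rw [h1, hab]
      show P (a • θ1 + b • θ2) ≤ a • P θ1 + b • P θ2
      simp only [hP, smul_eq_mul]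
      rw [show a * θ1 + b * θ2 = a*θ1+b*θ2 from rfl, hpt]
      have hcb := pen_combo S ((1 - θ1) • p + θ1 • q) ((1 - θ2) • p + θ2 • q)
        (θ := b) hb (by linarith)
      rw [show (1 - b) = a by linarith] at hcb
      calc lam * ∑ i' ∈ S, |(a • ((1-θ1) • p + θ1 • q) + b • ((1-θ2) • p + θ2 • q)) i'|
          ≤ lam * (a * ∑ i' ∈ S, |((1-θ1) • p + θ1 • q) i'|
              + b * ∑ i' ∈ S, |((1-θ2) • p + θ2 • q) i'|) := by
            apply mul_le_mul_of_nonneg_left _ hlam.le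
            exact hcb
        _ = _ := by ring
    have hline1 : (1 - (1:ℝ)) • p + (1:ℝ) • q = q := by module
    have hline0 : (1 - (0:ℝ)) • p + (0:ℝ) • q = p := by module
    have ht0u : t0 + u = E.mulVec q := by rw [ht0, hu]; abel
    have hmin : ∀ θ ∈ Set.Icc (0:ℝ) 1, gr (t0 + u) + P 1 ≤ gr (t0 + θ • u) + P θ := by
      intro θ hθ
      set y : Fin n → ℝ := (1 - θ) • p + θ • q with hy
      have hyX : y ∈ X := by
        rw [hX]
        intro i' hi'
        have h1 : 0 ≤ p i' := by have := hpmem.1; rw [hX] at this; exact this i' hi'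
        have h2 : 0 ≤ q i' := by have := hqmem.1; rw [hX] at this; exact this i' hi'
        have h3 : 0 ≤ 1 - θ := by linarith [hθ.2]
        have h4 := mul_nonneg h3 h1
        have h5 := mul_nonneg hθ.1 h2
        show 0 ≤ (1 - θ) * p i' + θ * q i'
        linarith
      have hyeq : ∀ j, j ≠ i → y j = p j := by
        intro j hj
        have := (hstep r i).2.2.1 j hj
        show (1 - θ) * p j + θ * q j = p j
        rw [show q j = p j from this]
        ring
      have hyDg : E.mulVec y ∈ Dg := by rw [hy, hmvline θ]; exact hseg θ hθ
      have h := (hstep r i).2.2.2 y hyX hyeq hyDg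
      rw [ht0u]
      calc gr (E.mulVec q) + P 1 = F q := by
            simp only [hF, hP, hline1]
        _ ≤ F y := h
        _ = gr (t0 + θ • u) + P θ := by
            simp only [hF, hP, hy]
            rw [hmvline θ]
    have hkd := key_descent hDgopen hgC2 t0 u hseg
      (by positivity : (0:ℝ) ≤ σ * δ ^ 2) hM hPconv hmin
    have hFq : F q = gr (t0 + u) + P 1 := by
      simp only [hF, hP, hline1, ht0u]
    have hFp : F p = gr t0 + P 0 := by
      simp only [hF, hP, hline0, ht0]
    rw [hFq, hFp]
    have hδ2 : (xi r ((i:ℕ)+1) i - xi r (i:ℕ) i) ^ 2 = δ ^ 2 := by rw [hδ]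
    rw [hδ2]
    linarith [hkd]
  -- coordinates only change at their own substep
  have hcoord : ∀ r : ℕ, ∀ i : Fin n,
      x r i = xi r (i:ℕ) i ∧ x (r+1) i = xi r ((i:ℕ)+1) i := by
    intro r i
    have hbefore : ∀ k, k ≤ (i:ℕ) → xi r k i = x r i := by
      intro k
      induction k with
      | zero => intro _; rw [hxi0]
      | succ k ih =>
        intro hk
        have hki : k < (i:ℕ) := hk
        have hkn : k < n := lt_trans hki i.isLt
        have hne' : i ≠ (⟨k, hkn⟩ : Fin n) := by
          intro h
          rw [Fin.ext_iff] at h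
          simp at h
          omega
        have := (hstep r ⟨k, hkn⟩).2.2.1 i hne'
        rw [show ((⟨k, hkn⟩ : Fin n) : ℕ) = k from rfl] at this
        rw [this]
        exact ih hki.le
    have hafter : ∀ dk, (i:ℕ) + 1 + dk ≤ n → xi r ((i:ℕ)+1+dk) i = xi r ((i:ℕ)+1) i := by
      intro dk
      induction dk with
      | zero => intro _; rfl
      | succ dk ih =>
        intro hk
        have hKn : (i:ℕ) + 1 + dk < n := by omega
        have hne' : i ≠ (⟨(i:ℕ)+1+dk, hKn⟩ : Fin n) := by
          intro h
          rw [Fin.ext_iff] at h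
          simp at h
          omega
        have h1 := (hstep r ⟨(i:ℕ)+1+dk, hKn⟩).2.2.1 i hne'
        rw [show ((⟨(i:ℕ)+1+dk, hKn⟩ : Fin n) : ℕ) = (i:ℕ)+1+dk from rfl] at h1
        rw [show (i:ℕ)+1+(dk+1) = ((i:ℕ)+1+dk)+1 by omega, h1]
        exact ih (by omega)
    constructor
    · exact (hbefore (i:ℕ) le_rfl).symm
    · rw [hxsucc r]
      have := hafter (n - ((i:ℕ)+1)) (by omega)
      rw [show (i:ℕ)+1+(n-((i:ℕ)+1)) = n by omega] at this
      exact this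
  -- per sweep estimate
  have hsweep : ∀ r : ℕ, ∑ i : Fin n, (x r i - x (r+1) i) ^ 2
      ≤ 2 / σ * (F (x r) - F (x (r+1))) := by
    intro r
    have h1 : ∀ i : Fin n, (x r i - x (r+1) i) ^ 2
        ≤ 2 / σ * (F (xi r (i:ℕ)) - F (xi r ((i:ℕ)+1))) := by
      intro i
      have hc := hcoord r i
      have hd := hstepdec r i
      have heq : (x r i - x (r+1) i) ^ 2 = (xi r ((i:ℕ)+1) i - xi r (i:ℕ) i) ^ 2 := by
        rw [hc.1, hc.2]; ring
      rw [heq]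
      rw [div_mul_eq_mul_div, le_div_iff₀ hσ0]
      nlinarith [hd]
    calc ∑ i : Fin n, (x r i - x (r+1) i) ^ 2
        ≤ ∑ i : Fin n, 2 / σ * (F (xi r (i:ℕ)) - F (xi r ((i:ℕ)+1))) :=
          Finset.sum_le_sum (fun i _ => h1 i)
      _ = 2 / σ * ∑ i : Fin n, (F (xi r (i:ℕ)) - F (xi r ((i:ℕ)+1))) := by
          rw [Finset.mul_sum]
      _ = 2 / σ * (F (x r) - F (x (r+1))) := by
          congr 1
          rw [Fin.sum_univ_eq_sum_range (fun k => F (xi r k) - F (xi r (k+1))) n]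
          rw [Finset.sum_range_sub' (fun k => F (xi r k)) n]
          rw [hxi0, hxsucc]
  -- summability
  have henorm : ∀ r : ℕ, eucNorm (x r - x (r+1)) ^ 2 = ∑ i : Fin n, (x r i - x (r+1) i) ^ 2 := by
    intro r
    rw [eucNorm, Real.sq_sqrt (Finset.sum_nonneg fun i _ => sq_nonneg _)]
    apply Finset.sum_congr rfl
    intro i _
    rw [Pi.sub_apply]
  apply summable_of_sum_range_le (c := 2 / σ * (c - F xs))
  · intro r
    rw [henorm r]
    exact Finset.sum_nonneg fun i _ => sq_nonneg _
  · intro N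
    calc ∑ r ∈ Finset.range N, eucNorm (x r - x (r+1)) ^ 2
        = ∑ r ∈ Finset.range N, ∑ i : Fin n, (x r i - x (r+1) i) ^ 2 :=
          Finset.sum_congr rfl (fun r _ => henorm r)
      _ ≤ ∑ r ∈ Finset.range N, 2 / σ * (F (x r) - F (x (r+1))) :=
          Finset.sum_le_sum (fun r _ => hsweep r)
      _ = 2 / σ * (F (x 0) - F (x N)) := by
          rw [← Finset.mul_sum, Finset.sum_range_sub' (fun r => F (x r)) N]
      _ ≤ 2 / σ * (c - F xs) := by
          apply mul_le_mul_of_nonneg_left _ (by positivity)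
          have h1 : F xs ≤ F (x N) := hFstar (x N) (hxmem N).1 (hxmem N).2
          rw [hc]
          linarith
end

section
/- The differences between successive CCM iterates for f₂ are square-summable: Σ_{r=0}^∞ ‖z^r − z^{r+1}‖² < ∞, where ‖·‖ is the Euclidean norm on ℝ^n. -/
open Filter Topology Matrix

/-- Euclidean norm of a vector in `ℝ^k`. -/
noncomputable def euclidNorm {k : ℕ} (v : Fin k → ℝ) : ℝ := Real.sqrt (∑ i, v i ^ 2)

lemma F_midpoint {m n : ℕ} (S : Finset (Fin n)) {lam : ℝ} (hlam : 0 ≤ lam)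
    (E : Matrix (Fin m) (Fin n) ℝ)
    (F : (Fin n → ℝ) → ℝ)
    (hF : ∀ x, F x = (∑ i, (E.mulVec x i) ^ 2) - (∑ i ∈ Sᶜ, Real.log (x i))
            + lam * ∑ i ∈ S, |x i|)
    (a b : Fin n → ℝ) (ha : ∀ j ∉ S, 0 < a j) (hb : ∀ j ∉ S, 0 < b j)
    (i : Fin n) (hab : ∀ j, j ≠ i → b j = a j) :
    F (fun j => (a j + b j) / 2) ≤ (F a + F b) / 2
      - (a i - b i) ^ 2 / 4 * ∑ k, (E k i) ^ 2 := by
  have hmv : ∀ k, E.mulVec (fun j => (a j + b j) / 2) k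
      = (E.mulVec a k + E.mulVec b k) / 2 := by
    intro k
    simp only [Matrix.mulVec, dotProduct]
    rw [← Finset.sum_add_distrib, Finset.sum_div]
    exact Finset.sum_congr rfl fun j _ => by ring
  have hdiff : ∀ k, E.mulVec b k = E.mulVec a k - E k i * (a i - b i) := by
    intro k
    simp only [Matrix.mulVec, dotProduct]
    have h : ∑ x, (E k x * a x - E k x * b x) = E k i * (a i - b i) := by
      rw [Finset.sum_eq_single i]
      · ring
      · intro j _ hj; rw [hab j hj]; ring
      · intro h; exact absurd (Finset.mem_univ i) h
    rw [Finset.sum_sub_distrib] at h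
    linarith
  have hquad : ∑ k, (E.mulVec (fun j => (a j + b j) / 2) k) ^ 2
      = ((∑ k, (E.mulVec a k) ^ 2) + ∑ k, (E.mulVec b k) ^ 2) / 2
        - (a i - b i) ^ 2 / 4 * ∑ k, (E k i) ^ 2 := by
    have h1 : ∀ k : Fin m, (E.mulVec (fun j => (a j + b j) / 2) k) ^ 2
        = ((E.mulVec a k) ^ 2 + (E.mulVec b k) ^ 2) / 2
          - (a i - b i) ^ 2 / 4 * (E k i) ^ 2 := by
      intro k
      rw [hmv k, hdiff k]
      ring
    rw [Finset.sum_congr rfl fun k _ => h1 k, Finset.sum_sub_distrib,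
      ← Finset.mul_sum, ← Finset.sum_div, Finset.sum_add_distrib]
  have hlog : ∀ j ∈ Sᶜ, Real.log (a j) + Real.log (b j)
      ≤ 2 * Real.log ((a j + b j) / 2) := by
    intro j hj
    have haj := ha j (Finset.mem_compl.mp hj)
    have hbj := hb j (Finset.mem_compl.mp hj)
    have h4 : Real.sqrt (a j * b j) ≤ (a j + b j) / 2 := by
      rw [show (a j + b j) / 2 = Real.sqrt (((a j + b j) / 2) ^ 2) from
        (Real.sqrt_sq (by positivity)).symm]
      apply Real.sqrt_le_sqrt
      nlinarith [sq_nonneg (a j - b j)]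
    have h5 : Real.log (Real.sqrt (a j * b j)) ≤ Real.log ((a j + b j) / 2) :=
      Real.log_le_log (Real.sqrt_pos.mpr (by positivity)) h4
    rw [Real.log_sqrt (by positivity), Real.log_mul (ne_of_gt haj) (ne_of_gt hbj)] at h5
    linarith
  have hlogsum : ∑ j ∈ Sᶜ, Real.log (a j) + ∑ j ∈ Sᶜ, Real.log (b j)
      ≤ 2 * ∑ j ∈ Sᶜ, Real.log ((a j + b j) / 2) := by
    have := Finset.sum_le_sum hlog
    rw [Finset.sum_add_distrib] at this
    rw [Finset.mul_sum]
    exact this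
  have habs : ∀ j ∈ S, 2 * |(a j + b j) / 2| ≤ |a j| + |b j| := by
    intro j _
    have := abs_add_le (a j) (b j)
    rw [abs_div]
    norm_num
    linarith [abs_add_le (a j) (b j)]
  have habssum : 2 * ∑ j ∈ S, |(a j + b j) / 2| ≤ ∑ j ∈ S, |a j| + ∑ j ∈ S, |b j| := by
    have := Finset.sum_le_sum habs
    rw [Finset.sum_add_distrib] at this
    rw [Finset.mul_sum]
    exact this
  have hlam2 : lam * ∑ j ∈ S, |(a j + b j) / 2|
      ≤ lam * ((∑ j ∈ S, |a j| + ∑ j ∈ S, |b j|) / 2) :=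
    mul_le_mul_of_nonneg_left (by linarith) hlam
  have hlam3 : lam * ((∑ j ∈ S, |a j| + ∑ j ∈ S, |b j|) / 2)
      = (lam * ∑ j ∈ S, |a j| + lam * ∑ j ∈ S, |b j|) / 2 := by ring
  rw [hF, hF, hF, hquad]
  rw [hlam3] at hlam2
  linarith

/-- The successive differences of the CCM iterates for `f₂` are square-summable. -/
theorem ccm_f2_square_summable
(m n : ℕ) (hm : 0 < m) (hn : 0 < n)
    (S : Finset (Fin n)) (lam : ℝ) (hlam : 0 < lam)
    (E : Matrix (Fin m) (Fin n) ℝ) (hE : ∀ j, ∃ i, E i j ≠ 0)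
    (X : Set (Fin n → ℝ)) (hX : X = {x | ∀ i ∉ S, 0 ≤ x i})
    (F : (Fin n → ℝ) → ℝ)
    (hF : ∀ x, F x = (∑ i, (E.mulVec x i) ^ 2) - (∑ i ∈ Sᶜ, Real.log (x i))
            + lam * ∑ i ∈ S, |x i|)
    (hA5 : ∀ ξ : ℝ, ∃ ξs > (0 : ℝ), ∀ x ∈ X, (∀ i ∉ S, 0 < x i) → F x ≤ ξ →
            (∀ i ∉ S, 1 / ξs ≤ x i ∧ x i ≤ ξs) ∧ (∀ i ∈ S, |x i| ≤ ξs))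
    (XStar : Set (Fin n → ℝ))
    (hXStar : XStar = {x | x ∈ X ∧ (∀ i ∉ S, 0 < x i) ∧
                ∀ y ∈ X, (∀ i ∉ S, 0 < y i) → F x ≤ F y})
    (z : ℕ → Fin n → ℝ) (zi : ℕ → ℕ → Fin n → ℝ)
    (hz0 : z 0 ∈ X) (hz0fin : ∀ i ∉ S, 0 < z 0 i)
    (hzi0 : ∀ r, zi r 0 = z r)
    (hstep : ∀ r, ∀ i : Fin n,
        zi r ((i : ℕ) + 1) ∈ X ∧ (∀ j ∉ S, 0 < zi r ((i : ℕ) + 1) j) ∧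
        (∀ j, j ≠ i → zi r ((i : ℕ) + 1) j = zi r (i : ℕ) j) ∧
        (∀ y ∈ X, (∀ j, j ≠ i → y j = zi r (i : ℕ) j) →
            (∀ j ∉ S, 0 < y j) → F (zi r ((i : ℕ) + 1)) ≤ F y))
    (hzsucc : ∀ r, z (r + 1) = zi r n) :
    Summable (fun r => euclidNorm (z r - z (r + 1)) ^ 2) := by
  classical
  haveI : Nonempty (Fin n) := ⟨⟨0, hn⟩⟩
  set w : Fin n → ℝ := fun i => ∑ k, (E k i) ^ 2 with hw
  have hwpos : ∀ i, 0 < w i := by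
    intro i
    obtain ⟨k, hk⟩ := hE i
    exact Finset.sum_pos' (fun k _ => sq_nonneg _) ⟨k, Finset.mem_univ k, by positivity⟩
  set c : ℝ := Finset.univ.inf' Finset.univ_nonempty w with hcdef
  have hc : 0 < c := by
    rw [hcdef, Finset.lt_inf'_iff]
    exact fun i _ => hwpos i
  have hcw : ∀ i, c ≤ w i := fun i => Finset.inf'_le _ (Finset.mem_univ i)
  -- invariants along a sweep
  have stepk : ∀ r, z r ∈ X → (∀ j ∉ S, 0 < z r j) →
      ∀ k, k ≤ n → zi r k ∈ X ∧ (∀ j ∉ S, 0 < zi r k j) ∧ F (zi r k) ≤ F (z r) := by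
    intro r hXr hposr k
    induction k with
    | zero => intro _; rw [hzi0]; exact ⟨hXr, hposr, le_refl _⟩
    | succ k ih =>
      intro hk
      have hkn : k < n := hk
      obtain ⟨h1, h2, h3⟩ := ih (le_of_lt hkn)
      obtain ⟨hb1, hb2, hb3, hb4⟩ := hstep r ⟨k, hkn⟩
      simp only [Fin.val_mk] at hb1 hb2 hb3 hb4
      refine ⟨hb1, hb2, ?_⟩
      have := hb4 (zi r k) h1 (fun j _ => rfl) h2
      linarith
  have base : ∀ r, z r ∈ X ∧ (∀ j ∉ S, 0 < z r j) ∧ F (z r) ≤ F (z 0) := by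
    intro r
    induction r with
    | zero => exact ⟨hz0, hz0fin, le_refl _⟩
    | succ r ih =>
      obtain ⟨h1, h2, h3⟩ := ih
      obtain ⟨g1, g2, g3⟩ := stepk r h1 h2 n le_rfl
      rw [hzsucc r]
      exact ⟨g1, g2, le_trans g3 h3⟩
  -- per-coordinate descent
  have descent : ∀ r, ∀ k, ∀ hk : k < n,
      F (zi r (k + 1)) ≤ F (zi r k)
        - c / 2 * (zi r k ⟨k, hk⟩ - zi r (k + 1) ⟨k, hk⟩) ^ 2 := by
    intro r k hkn
    obtain ⟨h1, h2, h3⟩ := stepk r (base r).1 (base r).2.1 k (le_of_lt hkn)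
    obtain ⟨hb1, hb2, hb3, hb4⟩ := hstep r ⟨k, hkn⟩
    simp only [Fin.val_mk] at hb1 hb2 hb3 hb4
    set a := zi r k
    set b := zi r (k + 1)
    set i : Fin n := ⟨k, hkn⟩
    have hmidpos : ∀ j ∉ S, 0 < (a j + b j) / 2 := by
      intro j hj
      have := h2 j hj; have := hb2 j hj
      positivity
    have hmidX : (fun j => (a j + b j) / 2) ∈ X := by
      rw [hX]
      intro j hj
      exact le_of_lt (hmidpos j hj)
    have hmid_agree : ∀ j, j ≠ i → (a j + b j) / 2 = a j := by
      intro j hj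
      rw [hb3 j hj]
      ring
    have hFb : F b ≤ F (fun j => (a j + b j) / 2) :=
      hb4 _ hmidX hmid_agree hmidpos
    have hFmid := F_midpoint S (le_of_lt hlam) E F hF a b h2 hb2 i hb3
    have hwc := hcw i
    have hd2 : 0 ≤ (a i - b i) ^ 2 := sq_nonneg _
    nlinarith [hFb, hFmid]
  -- coordinates not touched
  have agree : ∀ r, ∀ k, ∀ hk : k < n, ∀ j : Fin n, j ≠ ⟨k, hk⟩ →
      zi r (k + 1) j = zi r k j := by
    intro r k hk j hj
    have := (hstep r ⟨k, hk⟩).2.2.1 j hj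
    simpa using this
  have pers1 : ∀ r, ∀ i : Fin n, ∀ k, k ≤ (i : ℕ) → zi r k i = z r i := by
    intro r i k
    induction k with
    | zero => intro _; rw [hzi0]
    | succ k ih =>
      intro hk
      have hk' : k < (i : ℕ) := hk
      have hkn : k < n := lt_trans hk' i.isLt
      rw [agree r k hkn i (by simp [Fin.ext_iff]; omega), ih (le_of_lt hk')]
  have pers2 : ∀ r, ∀ i : Fin n, ∀ k, (i : ℕ) + 1 ≤ k → k ≤ n →
      zi r k i = zi r ((i : ℕ) + 1) i := by
    intro r i k
    induction k with
    | zero => omega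
    | succ k ih =>
      intro hk hkn'
      rcases Nat.lt_or_ge (i : ℕ) k with h | h
      · have hkn : k < n := hkn'
        rw [agree r k hkn i (by simp [Fin.ext_iff]; omega), ih (by omega) (by omega)]
      · have : (i : ℕ) + 1 = k + 1 := by omega
        rw [← this]
  have coord : ∀ r, ∀ i : Fin n, z r i - z (r + 1) i
      = zi r (i : ℕ) i - zi r ((i : ℕ) + 1) i := by
    intro r i
    rw [hzsucc r, ← pers1 r i (i : ℕ) le_rfl, pers2 r i n (Nat.succ_le_of_lt i.isLt) le_rfl]
  -- sweep inequality
  have sweep : ∀ r, c / 2 * ∑ i : Fin n, (z r i - z (r + 1) i) ^ 2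
      ≤ F (z r) - F (z (r + 1)) := by
    intro r
    have key : ∀ k, k ≤ n →
        F (zi r k) + c / 2 * ∑ i ∈ Finset.univ.filter (fun i : Fin n => (i : ℕ) < k),
          (zi r (i : ℕ) i - zi r ((i : ℕ) + 1) i) ^ 2 ≤ F (z r) := by
      intro k
      induction k with
      | zero => intro _; simp [hzi0]
      | succ k ih =>
        intro hk
        have hkn : k < n := hk
        have ihh := ih (le_of_lt hkn)
        have hd := descent r k hkn
        have hins : Finset.univ.filter (fun i : Fin n => (i : ℕ) < k + 1)
            = insert (⟨k, hkn⟩ : Fin n)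
                (Finset.univ.filter (fun i : Fin n => (i : ℕ) < k)) := by
          ext i
          simp [Fin.ext_iff, Nat.lt_succ_iff_lt_or_eq]
          omega
        rw [hins, Finset.sum_insert (by simp), mul_add]
        simp only [Fin.val_mk]
        linarith
    have keyn := key n le_rfl
    have huniv : Finset.univ.filter (fun i : Fin n => (i : ℕ) < n) = Finset.univ := by
      ext i; simp [i.isLt]
    rw [huniv] at keyn
    have hsum : ∑ i : Fin n, (z r i - z (r + 1) i) ^ 2
        = ∑ i : Fin n, (zi r (i : ℕ) i - zi r ((i : ℕ) + 1) i) ^ 2 :=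
      Finset.sum_congr rfl fun i _ => by rw [coord r i]
    rw [hsum, hzsucc r]
    linarith
  -- lower bound on F along iterates
  obtain ⟨ξs, hξs, hbd⟩ := hA5 (F (z 0))
  have hlow : ∀ r, -((Sᶜ.card : ℝ) * Real.log ξs) ≤ F (z r) := by
    intro r
    obtain ⟨hzX, hzpos, hzF⟩ := base r
    obtain ⟨hbox, _⟩ := hbd (z r) hzX hzpos hzF
    rw [hF]
    have h1 : (0:ℝ) ≤ ∑ i, (E.mulVec (z r) i) ^ 2 :=
      Finset.sum_nonneg fun i _ => sq_nonneg _
    have h2 : (0:ℝ) ≤ lam * ∑ i ∈ S, |z r i| :=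
      mul_nonneg (le_of_lt hlam) (Finset.sum_nonneg fun i _ => abs_nonneg _)
    have h3 : ∑ i ∈ Sᶜ, Real.log (z r i) ≤ (Sᶜ.card : ℝ) * Real.log ξs := by
      calc ∑ i ∈ Sᶜ, Real.log (z r i) ≤ ∑ _i ∈ Sᶜ, Real.log ξs := by
            apply Finset.sum_le_sum
            intro i hi
            have hi' := Finset.mem_compl.mp hi
            exact Real.log_le_log (hzpos i hi') ((hbox i hi').2)
        _ = (Sᶜ.card : ℝ) * Real.log ξs := by
            rw [Finset.sum_const, nsmul_eq_mul]
    linarith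
  -- conclude
  apply summable_of_sum_range_le
    (c := 2 / c * (F (z 0) + (Sᶜ.card : ℝ) * Real.log ξs))
  · intro r; exact sq_nonneg _
  · intro N
    have hsq : ∀ r, euclidNorm (z r - z (r + 1)) ^ 2 = ∑ i, (z r i - z (r + 1) i) ^ 2 := by
      intro r
      rw [euclidNorm, Real.sq_sqrt (Finset.sum_nonneg fun i _ => sq_nonneg _)]
      exact Finset.sum_congr rfl fun i _ => by simp [Pi.sub_apply]
    have htel : ∑ r ∈ Finset.range N, (F (z r) - F (z (r + 1))) = F (z 0) - F (z N) :=
      Finset.sum_range_sub' (fun r => F (z r)) N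
    have hb1 : c / 2 * ∑ r ∈ Finset.range N, euclidNorm (z r - z (r + 1)) ^ 2
        ≤ F (z 0) - F (z N) := by
      rw [← htel, Finset.mul_sum]
      apply Finset.sum_le_sum
      intro r _
      rw [hsq r]
      exact sweep r
    have hb2 := hlow N
    have hK : c / 2 * ∑ r ∈ Finset.range N, euclidNorm (z r - z (r + 1)) ^ 2
        ≤ F (z 0) + (Sᶜ.card : ℝ) * Real.log ξs := by linarith
    rw [div_mul_eq_mul_div, le_div_iff₀ hc]
    calc (∑ r ∈ Finset.range N, euclidNorm (z r - z (r + 1)) ^ 2) * c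
        = 2 * (c / 2 * ∑ r ∈ Finset.range N, euclidNorm (z r - z (r + 1)) ^ 2) := by ring
      _ ≤ 2 * (F (z 0) + (Sᶜ.card : ℝ) * Real.log ξs) := by linarith
end

section
/- Let k ≥ 1, let A be a k×k real positive semidefinite matrix with A_{kk} > 0, and let λ > 0. Define h(x) = −log x_k + xᵀAx + λ Σ_{j=1}^{k−1} |x_j| for x ∈ ℝ^{k−1} × (0, ∞). Then there exist constants a₁ > 0 and a₂ > 0, depending only on λ and A, such that h(x) ≥ a₁ x_k − a₂ for every x ∈ ℝ^{k−1} × (0, ∞). -/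
open Matrix

set_option maxHeartbeats 1000000 in
/-- Linear lower bound for `h(x) = −log x_k + xᵀAx + λ Σ_{j<k} |x_j|` with `A` positive
semidefinite, `A_{kk} > 0` and `λ > 0`: there exist `a₁, a₂ > 0` depending only on `λ`
and `A` with `h(x) ≥ a₁ x_k − a₂` whenever `x_k > 0`. -/
theorem neg_log_quadratic_l1_linear_lower_bound
    (k : ℕ) (A : Matrix (Fin (k + 1)) (Fin (k + 1)) ℝ)
    (hA : A.PosSemidef) (hAkk : 0 < A (Fin.last k) (Fin.last k))
    (lam : ℝ) (hlam : 0 < lam)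
    (h : (Fin (k + 1) → ℝ) → ℝ)
    (hh : ∀ x, h x = -Real.log (x (Fin.last k)) + x ⬝ᵥ A.mulVec x
        + lam * ∑ j ∈ Finset.univ.erase (Fin.last k), |x j|) :
    ∃ a₁ > (0 : ℝ), ∃ a₂ > (0 : ℝ), ∀ x : Fin (k + 1) → ℝ,
      0 < x (Fin.last k) → a₁ * x (Fin.last k) - a₂ ≤ h x := by
  set K := Fin.last k with hK
  set c := A K K with hc
  clear_value K c
  have hsym : ∀ u v : Fin (k + 1) → ℝ, u ⬝ᵥ A.mulVec v = v ⬝ᵥ A.mulVec u := by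
    intro u v
    rw [Matrix.dotProduct_mulVec, ← Matrix.mulVec_transpose]
    have hAt : Aᵀ = A := by
      have := hA.1
      simpa [Matrix.IsHermitian] using this
    rw [hAt, dotProduct_comm]
  have hpos : ∀ v : Fin (k + 1) → ℝ, 0 ≤ v ⬝ᵥ A.mulVec v := by
    intro v
    simpa using hA.dotProduct_mulVec_nonneg v
  set M : ℝ := ∑ j, |A K j| with hM
  have hMc : c ≤ M := by
    have h1 : |A K K| ≤ M := by
      exact Finset.single_le_sum (f := fun j => |A K j|) (fun i _ => abs_nonneg _)
        (Finset.mem_univ K)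
    calc c = A K K := hc
      _ ≤ |A K K| := le_abs_self _
      _ ≤ M := h1
  have hMpos : 0 < M := lt_of_lt_of_le hAkk hMc
  set a₁ : ℝ := lam * c / (2 * M) with ha₁
  have ha₁pos : 0 < a₁ := by positivity
  set a : ℝ := a₁ / 2 with ha
  have hapos : 0 < a := by positivity
  set a₂ : ℝ := a₁ ^ 2 / c + 1 + |Real.log a| with ha₂
  have ha₂pos : 0 < a₂ := by positivity
  clear_value M a₁ a a₂
  refine ⟨a, hapos, a₂, ha₂pos, fun x hx => ?_⟩
  set t := x K with ht
  set y : Fin (k + 1) → ℝ := Function.update x K 0 with hy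
  set e : Fin (k + 1) → ℝ := Pi.single K (1 : ℝ) with he
  set b : ℝ := (A.mulVec y) K with hb
  set S : ℝ := ∑ j ∈ Finset.univ.erase K, |x j| with hS
  have hSnn : 0 ≤ S := Finset.sum_nonneg fun i _ => abs_nonneg _
  clear_value t y e b S
  have hexp : ∀ s : ℝ, (y + s • e) ⬝ᵥ A.mulVec (y + s • e)
      = y ⬝ᵥ A.mulVec y + 2 * s * b + s ^ 2 * c := by
    intro s
    have h1 : e ⬝ᵥ A.mulVec y = b := by
      simp [he, hb, single_dotProduct]
    have h2 : y ⬝ᵥ A.mulVec e = b := by rw [hsym]; exact h1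
    have h3 : e ⬝ᵥ A.mulVec e = c := by
      simp [he, single_dotProduct, hc]
    simp only [Matrix.mulVec_add, Matrix.mulVec_smul, add_dotProduct,
      dotProduct_add, smul_dotProduct, dotProduct_smul,
      h1, h2, h3, smul_eq_mul]
    ring
  have hxy : x = y + t • e := by
    funext i
    by_cases hi : i = K
    · subst hi; simp [hy, he, ht]
    · simp [hy, he, Function.update_of_ne hi, Pi.single_eq_of_ne hi]
  have hQx : x ⬝ᵥ A.mulVec x = y ⬝ᵥ A.mulVec y + 2 * t * b + t ^ 2 * c := by
    rw [hxy]; exact hexp t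
  have hQy : b ^ 2 / c ≤ y ⬝ᵥ A.mulVec y := by
    have h0 := hpos (y + (-(b / c)) • e)
    rw [hexp (-(b / c))] at h0
    have hc0 : (0:ℝ) < c := hAkk
    have heq : 2 * -(b / c) * b + (-(b / c)) ^ 2 * c = -(b ^ 2 / c) := by
      field_simp
      ring
    linarith [h0, heq]
  have hbS : |b| ≤ M * S := by
    have hby : b = ∑ j, A K j * y j := by
      simp [hb, Matrix.mulVec, dotProduct]
    have hyK : y K = 0 := by simp [hy]
    have hb2 : b = ∑ j ∈ Finset.univ.erase K, A K j * x j := by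
      rw [hby]
      conv_lhs => rw [← Finset.insert_erase (Finset.mem_univ K)]
      rw [Finset.sum_insert (Finset.notMem_erase K _), hyK, mul_zero, zero_add]
      refine Finset.sum_congr rfl fun j hj => ?_
      rw [Finset.mem_erase] at hj
      simp [hy, Function.update_of_ne hj.1]
    rw [hb2]
    calc |∑ j ∈ Finset.univ.erase K, A K j * x j|
        ≤ ∑ j ∈ Finset.univ.erase K, |A K j * x j| := Finset.abs_sum_le_sum_abs _ _
      _ ≤ ∑ j ∈ Finset.univ.erase K, M * |x j| := by
          apply Finset.sum_le_sum
          intro j hj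
          rw [abs_mul]
          apply mul_le_mul_of_nonneg_right _ (abs_nonneg _)
          rw [hM]
          exact Finset.single_le_sum (f := fun i => |A K i|) (fun i _ => abs_nonneg _)
            (Finset.mem_univ j)
      _ = M * S := by rw [hS, Finset.mul_sum]
  have hstepA : a₁ * t - a₁ ^ 2 / c ≤ x ⬝ᵥ A.mulVec x + lam * S := by
    have hlamS : lam * |b| / M ≤ lam * S := by
      rw [div_le_iff₀ hMpos]
      nlinarith [hbS, hlam.le, hSnn]
    have hkey : (b + c * t) ^ 2 / c + lam * |b| / M ≤ x ⬝ᵥ A.mulVec x + lam * S := by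
      have hle : (b + c * t) ^ 2 / c ≤ y ⬝ᵥ A.mulVec y + 2 * t * b + t ^ 2 * c := by
        have hc0 : (0:ℝ) < c := hAkk
        rw [div_le_iff₀ hc0]
        rw [div_le_iff₀ hc0] at hQy
        nlinarith [hQy, hc0]
      rw [hQx]
      linarith
    refine le_trans ?_ hkey
    by_cases hcase : c * t / 2 ≤ |b|
    · have h1 : a₁ * t ≤ lam * |b| / M := by
        rw [ha₁, div_mul_eq_mul_div, div_le_div_iff₀ (by positivity) hMpos]
        nlinarith [mul_le_mul_of_nonneg_left hcase (mul_nonneg hlam.le hMpos.le)]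
      have h2 : (0:ℝ) ≤ (b + c * t) ^ 2 / c := div_nonneg (sq_nonneg _) hAkk.le
      have h3 : (0:ℝ) < a₁ ^ 2 / c := div_pos (pow_pos ha₁pos 2) hAkk
      linarith
    · push_neg at hcase
      have habs := abs_lt.mp hcase
      have h1 : c * t / 2 ≤ b + c * t := by linarith [habs.1]
      have h0 : (0:ℝ) ≤ c * t / 2 := by
        have := mul_nonneg hAkk.le hx.le
        linarith
      have h2 : (0:ℝ) ≤ lam * |b| / M :=
        div_nonneg (mul_nonneg hlam.le (abs_nonneg b)) hMpos.le
      have h3 : a₁ * t - a₁ ^ 2 / c ≤ (b + c * t) ^ 2 / c := by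
        rw [sub_le_iff_le_add, ← add_div, le_div_iff₀ hAkk]
        nlinarith [sq_nonneg (c * t / 2 - a₁), mul_self_le_mul_self h0 h1]
      linarith
  have hlog : -(a * t) + 1 + Real.log a ≤ -Real.log t := by
    have hl := Real.log_le_sub_one_of_pos (mul_pos hapos hx)
    rw [Real.log_mul (ne_of_gt hapos) (ne_of_gt hx)] at hl
    linarith
  rw [hh x]
  have habs2 : -|Real.log a| ≤ Real.log a := neg_abs_le _
  have : a * t - a₂ ≤ -Real.log t + (x ⬝ᵥ A.mulVec x + lam * S) := by
    have := add_le_add hlog hstepA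
    rw [ha₂]
    have hat : a₁ * t - a * t = a * t := by rw [ha]; ring
    linarith
  calc a * t - a₂ ≤ -Real.log t + (x ⬝ᵥ A.mulVec x + lam * S) := this
    _ = -Real.log (x K) + x ⬝ᵥ A.mulVec x
        + lam * ∑ j ∈ Finset.univ.erase K, |x j| := by rw [ht, hS]; ring
end
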